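/- arXiv:2106.04911 — 5 statements merged into one kernel-verified Lean document; each statement's English description precedes it below -/
import Mathlib

section
/- Let $\mathcal{L}_1,\dots,\mathcal{L}_n:\mathbb{R}^d\to\mathbb{R}$ each have $L$-Lipschitz continuous gradient, let $\alpha\in[0,(\sqrt{2}-1)/L)$, define $F_i(w) = \mathcal{L}_i(w-\alpha\nabla\mathcal{L}_i(w))$, $F = \frac{1}{n}\sum_i F_i$, and $\mathcal{L} = \frac{1}{n}\sum_i \mathcal{L}_i$. Suppose $\frac{1}{n}\sum_{i=1}^n\|\nabla\mathcal{L}_i(w)-\nabla\mathcal{L}(w)\|^2 \le \gamma_G^2$ for all $w$. Then for all $w$: $\|\nabla\mathcal{L}(w)\| \le C_1\|\nabla F(w)\| + C_2\gamma_G$, where $C_1 = \frac{1}{1-2\alpha L-\alpha^2 L^2}$ and $C_2 = \frac{2\alpha L + \alpha^2 L^2}{1-2\alpha L - \alpha^2 L^2}$. -/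
set_option maxHeartbeats 800000

open Finset

/-- Lemma A.3(i) of Fallah et al.: if each `𝓛ᵢ` has `L`-Lipschitz gradient,
`α ∈ [0, (√2-1)/L)`, and the gradient dissimilarity is bounded by `γG²`, then
`‖∇𝓛(w)‖ ≤ C₁‖∇F(w)‖ + C₂ γG` where
`∇F(w) = (1/n)∑ᵢ (I - α∇²𝓛ᵢ(w)) ∇𝓛ᵢ(w - α∇𝓛ᵢ(w))`. -/
theorem grad_to_meta (n d : ℕ) (hn : 0 < n) (L α γG : ℝ) (hL : 0 < L) (hγ : 0 ≤ γG)
    (hα0 : 0 ≤ α) (hα : α < (Real.sqrt 2 - 1) / L)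
    (𝓛 : Fin n → EuclideanSpace ℝ (Fin d) → ℝ)
    (grad : Fin n → EuclideanSpace ℝ (Fin d) → EuclideanSpace ℝ (Fin d))
    (hess : Fin n → EuclideanSpace ℝ (Fin d) →
      EuclideanSpace ℝ (Fin d) →L[ℝ] EuclideanSpace ℝ (Fin d))
    (hgrad : ∀ i w, HasGradientAt (𝓛 i) (grad i w) w)
    (hhess : ∀ i w, HasFDerivAt (grad i) (hess i w) w)
    (hLip : ∀ i w w', ‖grad i w - grad i w'‖ ≤ L * ‖w - w'‖)
    (hdis : ∀ w : EuclideanSpace ℝ (Fin d),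
      (n : ℝ)⁻¹ * ∑ i, ‖grad i w - (n : ℝ)⁻¹ • ∑ j, grad j w‖ ^ 2 ≤ γG ^ 2)
    (w : EuclideanSpace ℝ (Fin d)) :
    ‖(n : ℝ)⁻¹ • ∑ i, grad i w‖
      ≤ (1 - 2 * α * L - α ^ 2 * L ^ 2)⁻¹ *
          ‖(n : ℝ)⁻¹ • ∑ i, (grad i (w - α • grad i w)
              - α • hess i w (grad i (w - α • grad i w)))‖
        + (2 * α * L + α ^ 2 * L ^ 2) / (1 - 2 * α * L - α ^ 2 * L ^ 2) * γG := by
  have hn' : (0:ℝ) < (n:ℝ) := by exact_mod_cast hn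
  have hninv : (0:ℝ) ≤ (n:ℝ)⁻¹ := by positivity
  have hsqrt2 : (1:ℝ) < Real.sqrt 2 := by
    nlinarith [Real.sq_sqrt (by norm_num : (0:ℝ) ≤ 2), Real.sqrt_nonneg 2]
  have hαL : α * L < Real.sqrt 2 - 1 := (lt_div_iff₀ hL).mp hα
  set c : ℝ := 2 * α * L + α ^ 2 * L ^ 2 with hc
  have hc0 : 0 ≤ c := by positivity
  have hc1 : c < 1 := by
    nlinarith [mul_nonneg hα0 hL.le, hαL, Real.sq_sqrt (by norm_num : (0:ℝ) ≤ 2),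
      Real.sqrt_nonneg 2]
  have h1c : 0 < 1 - c := by linarith
  set m : Fin n → EuclideanSpace ℝ (Fin d) :=
    fun i => grad i (w - α • grad i w) - α • hess i w (grad i (w - α • grad i w)) with hm
  set g : Fin n → EuclideanSpace ℝ (Fin d) := fun i => grad i w with hg
  set gbar : EuclideanSpace ℝ (Fin d) := (n : ℝ)⁻¹ • ∑ i, g i with hgbar
  set mbar : EuclideanSpace ℝ (Fin d) := (n : ℝ)⁻¹ • ∑ i, m i with hmbar
  clear_value c m g gbar mbar
  -- Lipschitz structure
  have hLipW : ∀ i, LipschitzWith ⟨L, hL.le⟩ (grad i) := fun i =>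
    LipschitzWith.of_dist_le_mul (fun a b => by
      rw [dist_eq_norm, dist_eq_norm]; exact hLip i a b)
  have hHess : ∀ i, ‖hess i w‖ ≤ L := fun i =>
    (hhess i w).le_of_lipschitz (hLipW i)
  -- pointwise bound ‖g i - m i‖ ≤ c * ‖g i‖
  have hkey : ∀ i, ‖g i - m i‖ ≤ c * ‖g i‖ := by
    intro i
    have hmi : m i = grad i (w - α • grad i w)
        - α • hess i w (grad i (w - α • grad i w)) := by simp only [hm]
    have hgi : g i = grad i w := by simp only [hg]
    set u := grad i (w - α • grad i w) with hu
    have h1 : ‖g i - u‖ ≤ α * L * ‖g i‖ := by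
      have h := hLip i w (w - α • grad i w)
      rw [sub_sub_cancel, norm_smul, Real.norm_eq_abs, abs_of_nonneg hα0] at h
      calc ‖g i - u‖ = ‖grad i w - grad i (w - α • grad i w)‖ := by rw [hgi, hu]
        _ ≤ L * (α * ‖grad i w‖) := h
        _ = α * L * ‖g i‖ := by rw [hgi]; ring
    have hun : ‖u‖ ≤ (1 + α * L) * ‖g i‖ := by
      have h2 : ‖u‖ ≤ ‖g i‖ + ‖g i - u‖ := by
        have := norm_add_le (g i) (u - g i)
        simpa [norm_sub_rev (g i) u] using this
      nlinarith [norm_nonneg (g i)]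
    have h2 : ‖α • hess i w u‖ ≤ α * L * ((1 + α * L) * ‖g i‖) := by
      rw [norm_smul, Real.norm_eq_abs, abs_of_nonneg hα0]
      have h3 := (hess i w).le_of_opNorm_le (hHess i) u
      calc α * ‖hess i w u‖ ≤ α * (L * ‖u‖) :=
            mul_le_mul_of_nonneg_left h3 hα0
        _ ≤ α * (L * ((1 + α * L) * ‖g i‖)) :=
            mul_le_mul_of_nonneg_left (mul_le_mul_of_nonneg_left hun hL.le) hα0
        _ = α * L * ((1 + α * L) * ‖g i‖) := by ring
    have hgm : g i - m i = (g i - u) + α • hess i w u := by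
      rw [hmi]; abel
    calc ‖g i - m i‖ = ‖(g i - u) + α • hess i w u‖ := by rw [hgm]
      _ ≤ ‖g i - u‖ + ‖α • hess i w u‖ := norm_add_le _ _
      _ ≤ α * L * ‖g i‖ + α * L * ((1 + α * L) * ‖g i‖) := add_le_add h1 h2
      _ = c * ‖g i‖ := by rw [hc]; ring
  -- average of pointwise bounds
  have hsum : ‖gbar - mbar‖ ≤ c * ((n:ℝ)⁻¹ * ∑ i, ‖g i‖) := by
    have e1 : gbar - mbar = (n:ℝ)⁻¹ • ∑ i, (g i - m i) := by
      rw [hgbar, hmbar, ← smul_sub, ← Finset.sum_sub_distrib]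
    calc ‖gbar - mbar‖ = ‖(n:ℝ)⁻¹ • ∑ i, (g i - m i)‖ := by rw [e1]
      _ ≤ (n:ℝ)⁻¹ * ∑ i, ‖g i - m i‖ := by
          rw [norm_smul, Real.norm_eq_abs, abs_of_nonneg hninv]
          exact mul_le_mul_of_nonneg_left (norm_sum_le _ _) hninv
      _ ≤ (n:ℝ)⁻¹ * ∑ i, c * ‖g i‖ := by
          apply mul_le_mul_of_nonneg_left _ hninv
          exact Finset.sum_le_sum fun i _ => hkey i
      _ = c * ((n:ℝ)⁻¹ * ∑ i, ‖g i‖) := by rw [← Finset.mul_sum]; ring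
  -- dissimilarity bound: average of ‖g i - gbar‖ ≤ γG
  have hdev : (n:ℝ)⁻¹ * ∑ i, ‖g i - gbar‖ ≤ γG := by
    have hd : (n:ℝ)⁻¹ * ∑ i, ‖g i - gbar‖ ^ 2 ≤ γG ^ 2 := by
      simp only [hgbar, hg]; exact hdis w
    have hcheb : (∑ i, ‖g i - gbar‖) ^ 2 ≤ (n:ℝ) * ∑ i, ‖g i - gbar‖ ^ 2 := by
      have := sq_sum_le_card_mul_sum_sq (s := (univ : Finset (Fin n)))
        (f := fun i => ‖g i - gbar‖)
      simpa using this
    have hx : (0:ℝ) ≤ (n:ℝ)⁻¹ * ∑ i, ‖g i - gbar‖ := by positivity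
    have hsq : ((n:ℝ)⁻¹ * ∑ i, ‖g i - gbar‖) ^ 2 ≤ γG ^ 2 := by
      have : ((n:ℝ)⁻¹ * ∑ i, ‖g i - gbar‖) ^ 2
          = (n:ℝ)⁻¹ * ((n:ℝ)⁻¹ * (∑ i, ‖g i - gbar‖) ^ 2) := by
        ring
      rw [this]
      calc (n:ℝ)⁻¹ * ((n:ℝ)⁻¹ * (∑ i, ‖g i - gbar‖) ^ 2)
          ≤ (n:ℝ)⁻¹ * ((n:ℝ)⁻¹ * ((n:ℝ) * ∑ i, ‖g i - gbar‖ ^ 2)) := by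
            apply mul_le_mul_of_nonneg_left _ hninv
            exact mul_le_mul_of_nonneg_left hcheb hninv
        _ = (n:ℝ)⁻¹ * ∑ i, ‖g i - gbar‖ ^ 2 := by
            rw [inv_mul_cancel_left₀ hn'.ne']
        _ ≤ γG ^ 2 := hd
    nlinarith
  -- average norm bound
  have hS : (n:ℝ)⁻¹ * ∑ i, ‖g i‖ ≤ ‖gbar‖ + γG := by
    have h1 : ∑ i, ‖g i‖ ≤ ∑ i, (‖g i - gbar‖ + ‖gbar‖) := by
      apply Finset.sum_le_sum
      intro i _
      have := norm_add_le (g i - gbar) gbar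
      simpa using this
    have h2 : ∑ i, (‖g i - gbar‖ + ‖gbar‖)
        = (∑ i, ‖g i - gbar‖) + (n:ℝ) * ‖gbar‖ := by
      rw [Finset.sum_add_distrib, Finset.sum_const, card_univ, Fintype.card_fin,
        nsmul_eq_mul]
    have h3 : (n:ℝ)⁻¹ * ∑ i, ‖g i‖
        ≤ (n:ℝ)⁻¹ * ∑ i, ‖g i - gbar‖ + ‖gbar‖ := by
      have := mul_le_mul_of_nonneg_left h1 hninv
      rw [h2, mul_add] at this
      rw [inv_mul_cancel_left₀ (ne_of_gt hn')] at this
      linarith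
    linarith [hdev]
  -- combine
  have hM : ‖gbar‖ ≤ ‖mbar‖ + c * (‖gbar‖ + γG) := by
    have h1 : ‖gbar‖ - ‖mbar‖ ≤ ‖gbar - mbar‖ := norm_sub_norm_le _ _
    have h2 : c * ((n:ℝ)⁻¹ * ∑ i, ‖g i‖) ≤ c * (‖gbar‖ + γG) :=
      mul_le_mul_of_nonneg_left hS hc0
    linarith [hsum]
  have hfin : (1 - c) * ‖gbar‖ ≤ ‖mbar‖ + c * γG := by nlinarith
  have hrw : 1 - 2 * α * L - α ^ 2 * L ^ 2 = 1 - c := by rw [hc]; ring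
  rw [hrw]
  rw [div_mul_eq_mul_div, inv_mul_eq_div, ← add_div, le_div_iff₀ h1c]
  nlinarith [hfin]
end

section
/- Let each $\mathcal{L}_i:\mathbb{R}^d\to\mathbb{R}$ have $L$-Lipschitz gradient and $\rho$-Lipschitz Hessian, let $\alpha\in[0,1/L]$, and set $F(w) = \frac{1}{n}\sum_{i=1}^n \mathcal{L}_i(w-\alpha\nabla\mathcal{L}_i(w))$. Then for all $w, w'\in\mathbb{R}^d$: $F(w') - F(w) - \langle \nabla F(w), w'-w\rangle \le \frac{L(w)}{2}\|w'-w\|^2$, where $L(w) = 4L + \frac{2\rho\alpha}{n}\sum_{i=1}^n \|\nabla\mathcal{L}_i(w)\|$. -/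
open Finset InnerProductSpace Set
open scoped RealInnerProductSpace

section Aux

variable {E : Type*} [NormedAddCommGroup E] [InnerProductSpace ℝ E] [CompleteSpace E]

/-- Symmetry of the Hessian (derivative of the gradient). -/
lemma hess_symm (f : E → ℝ) (g : E → E) (H : E →L[ℝ] E) (x : E)
    (hg : ∀ y, HasGradientAt f (g y) y) (hH : HasFDerivAt g H x) (u v : E) :
    ⟪H u, v⟫ = ⟪u, H v⟫ := by
  set T : E →L[ℝ] (E →L[ℝ] ℝ) :=
    (toDual ℝ E).toContinuousLinearEquiv.toContinuousLinearMap with hT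
  have hf' : ∀ y, HasFDerivAt f (toDual ℝ E (g y)) y := fun y => (hg y).hasFDerivAt
  have h2 : HasFDerivAt (fun y => toDual ℝ E (g y)) (T.comp H) x :=
    T.hasFDerivAt.comp x hH
  have := second_derivative_symmetric hf' h2 u v
  simp only [hT, ContinuousLinearMap.comp_apply,
    ContinuousLinearEquiv.coe_coe, LinearIsometryEquiv.coe_toContinuousLinearEquiv,
    toDual_apply_apply] at this
  rw [this, real_inner_comm]

/-- Gradient of the MAML inner-step objective `u ↦ f (u - α • g u)`. -/
lemma maml_grad (f : E → ℝ) (g : E → E) (H : E → (E →L[ℝ] E)) (α : ℝ)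
    (hg : ∀ y, HasGradientAt f (g y) y) (hH : ∀ y, HasFDerivAt g (H y) y) (x : E) :
    HasGradientAt (fun u => f (u - α • g u))
      (g (x - α • g x) - α • H x (g (x - α • g x))) x := by
  set y := x - α • g x with hy
  have hφ : HasFDerivAt (fun u => u - α • g u)
      (ContinuousLinearMap.id ℝ E - α • H x) x :=
    (hasFDerivAt_id x).sub ((hH x).const_smul α)
  have hcomp : HasFDerivAt (fun u => f (u - α • g u))
      ((toDual ℝ E (g y)).comp (ContinuousLinearMap.id ℝ E - α • H x)) x :=
    ((hg y).hasFDerivAt).comp x hφ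
  rw [hasGradientAt_iff_hasFDerivAt]
  refine hcomp.congr_fderiv ?_
  ext v
  simp only [toDual_apply_apply, ContinuousLinearMap.comp_apply, ContinuousLinearMap.sub_apply,
    ContinuousLinearMap.coe_id', id_eq, ContinuousLinearMap.smul_apply]
  rw [inner_sub_left, inner_sub_right, real_inner_smul_left, real_inner_smul_right,
    hess_symm f g (H x) x hg (hH x)]

/-- Descent lemma with a base-point Lipschitz bound on the gradient. -/
lemma descent_lemma (f : E → ℝ) (G : E → E) (hf : ∀ x, HasGradientAt f (G x) x)
    (C : ℝ) (w w' : E) (hG : ∀ u, ‖G u - G w‖ ≤ C * ‖u - w‖) :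
    f w' - f w - ⟪G w, w' - w⟫ ≤ C / 2 * ‖w' - w‖ ^ 2 := by
  set h : E := w' - w with hh
  set φ : ℝ → ℝ := fun t => f (w + t • h) - t * ⟪G w, h⟫ - C * t ^ 2 / 2 * ‖h‖ ^ 2 with hφ
  have hderiv : ∀ t : ℝ, HasDerivAt φ
      (⟪G (w + t • h), h⟫ - ⟪G w, h⟫ - C * t * ‖h‖ ^ 2) t := by
    intro t
    have hc : HasDerivAt (fun t : ℝ => w + t • h) h t := by
      simpa using ((hasDerivAt_id t).smul_const h).const_add w
    have h1 : HasDerivAt (fun t : ℝ => f (w + t • h)) (⟪G (w + t • h), h⟫) t := by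
      have := ((hf (w + t • h)).hasFDerivAt).comp_hasDerivAt t hc
      simpa [toDual_apply_apply, Function.comp_def] using this
    have h2 : HasDerivAt (fun t : ℝ => t * ⟪G w, h⟫) (⟪G w, h⟫) t := by
      simpa using (hasDerivAt_id t).mul_const (⟪G w, h⟫)
    have h3 : HasDerivAt (fun t : ℝ => C * t ^ 2 / 2 * ‖h‖ ^ 2) (C * t * ‖h‖ ^ 2) t := by
      have : HasDerivAt (fun t : ℝ => t ^ 2) (2 * t) t := by
        simpa using hasDerivAt_pow 2 t
      have := ((this.const_mul C).div_const 2).mul_const (‖h‖ ^ 2)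
      refine this.congr_deriv ?_; ring
    exact (h1.sub h2).sub h3
  have hanti : AntitoneOn φ (Ici (0 : ℝ)) := by
    apply antitoneOn_of_deriv_nonpos (convex_Ici 0)
    · exact Continuous.continuousOn (by
        have : Differentiable ℝ φ := fun t => (hderiv t).differentiableAt
        exact this.continuous)
    · intro t ht
      exact ((hderiv t).differentiableAt).differentiableWithinAt
    · intro t ht
      rw [interior_Ici] at ht
      rw [(hderiv t).deriv]
      have hb : ⟪G (w + t • h) - G w, h⟫ ≤ C * t * ‖h‖ ^ 2 := by
        calc ⟪G (w + t • h) - G w, h⟫ ≤ ‖G (w + t • h) - G w‖ * ‖h‖ :=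
              real_inner_le_norm _ _
          _ ≤ (C * ‖(w + t • h) - w‖) * ‖h‖ := by
              gcongr; exact hG _
          _ = C * t * ‖h‖ ^ 2 := by
              rw [add_sub_cancel_left, norm_smul, Real.norm_eq_abs,
                abs_of_pos (mem_Ioi.mp ht)]
              ring
      rw [inner_sub_left] at hb
      linarith
  have h01 := hanti (self_mem_Ici) (mem_Ici.mpr zero_le_one) zero_le_one
  simp only [hφ, zero_smul, add_zero, one_smul, zero_mul, zero_pow, mul_zero, one_pow,
    sub_zero, mul_one, zero_div] at h01
  have hw1 : w + h = w' := by rw [hh]; abel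
  rw [hw1] at h01
  nlinarith [h01]

/-- The base-point Lipschitz bound on the MAML gradient. -/
lemma maml_lip (g : E → E) (H : E → (E →L[ℝ] E)) (L ρ α : ℝ)
    (hL : 0 < L) (hρ : 0 ≤ ρ) (hα0 : 0 ≤ α) (hαL : α * L ≤ 1)
    (hLipG : ∀ u v, ‖g u - g v‖ ≤ L * ‖u - v‖)
    (hHle : ∀ u, ‖H u‖ ≤ L)
    (hLipH : ∀ u v, ‖H u - H v‖ ≤ ρ * ‖u - v‖) (w u : E) :
    ‖(g (u - α • g u) - α • H u (g (u - α • g u)))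
      - (g (w - α • g w) - α • H w (g (w - α • g w)))‖
      ≤ (4 * L + 2 * ρ * α * ‖g w‖) * ‖u - w‖ := by
  set yu := u - α • g u with hyu
  set yw := w - α • g w with hyw
  set a := g yu - g yw with ha
  have hid : (g yu - α • H u (g yu)) - (g yw - α • H w (g yw))
      = a - α • (H u a) - α • ((H u - H w) (g yw)) := by
    simp only [ha, map_sub, ContinuousLinearMap.sub_apply, smul_sub]
    abel
  have hyd : ‖yu - yw‖ ≤ 2 * ‖u - w‖ := by
    have h1 : yu - yw = (u - w) - α • (g u - g w) := by
      rw [hyu, hyw, smul_sub]; abel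
    calc ‖yu - yw‖ ≤ ‖u - w‖ + ‖α • (g u - g w)‖ := by rw [h1]; exact norm_sub_le _ _
      _ = ‖u - w‖ + α * ‖g u - g w‖ := by
          rw [norm_smul, Real.norm_eq_abs, abs_of_nonneg hα0]
      _ ≤ ‖u - w‖ + α * (L * ‖u - w‖) := by gcongr; exact hLipG u w
      _ ≤ 2 * ‖u - w‖ := by nlinarith [norm_nonneg (u - w)]
  have hna : ‖a‖ ≤ L * (2 * ‖u - w‖) :=
    le_trans (hLipG yu yw) (by gcongr)
  have hgyw : ‖g yw‖ ≤ 2 * ‖g w‖ := by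
    have h1 : ‖g yw - g w‖ ≤ L * ‖yw - w‖ := hLipG yw w
    have h2 : yw - w = -(α • g w) := by rw [hyw]; abel
    have h3 : ‖yw - w‖ = α * ‖g w‖ := by
      rw [h2, norm_neg, norm_smul, Real.norm_eq_abs, abs_of_nonneg hα0]
    have h4 : ‖g yw‖ ≤ ‖g w‖ + ‖g yw - g w‖ := by
      simpa using norm_add_le (g w) (g yw - g w)
    have h5 : L * ‖yw - w‖ ≤ ‖g w‖ := by
      rw [h3]
      nlinarith [norm_nonneg (g w)]
    linarith
  have hHua : ‖H u a‖ ≤ L * ‖a‖ :=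
    le_trans ((H u).le_opNorm a) (by gcongr; exact hHle u)
  have hHd : ‖(H u - H w) (g yw)‖ ≤ (ρ * ‖u - w‖) * ‖g yw‖ :=
    le_trans ((H u - H w).le_opNorm (g yw)) (by gcongr; exact hLipH u w)
  rw [hid]
  calc ‖a - α • (H u a) - α • ((H u - H w) (g yw))‖
      ≤ ‖a - α • (H u a)‖ + ‖α • ((H u - H w) (g yw))‖ := norm_sub_le _ _
    _ ≤ (‖a‖ + ‖α • (H u a)‖) + ‖α • ((H u - H w) (g yw))‖ := by
        gcongr; exact norm_sub_le _ _
    _ = ‖a‖ + α * ‖H u a‖ + α * ‖(H u - H w) (g yw)‖ := by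
        rw [norm_smul, norm_smul, Real.norm_eq_abs, abs_of_nonneg hα0]
    _ ≤ (4 * L + 2 * ρ * α * ‖g w‖) * ‖u - w‖ := by
        have hb1 : α * ‖H u a‖ ≤ α * (L * (L * (2 * ‖u - w‖))) := by
          gcongr
          exact le_trans hHua (by gcongr)
        have hb1' : α * (L * (L * (2 * ‖u - w‖))) ≤ 2 * L * ‖u - w‖ := by
          nlinarith [mul_nonneg (sub_nonneg.mpr hαL)
            (mul_nonneg hL.le (norm_nonneg (u - w)))]
        have hb2 : α * ‖(H u - H w) (g yw)‖ ≤ α * ((ρ * ‖u - w‖) * (2 * ‖g w‖)) := by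
          gcongr
          exact le_trans hHd (by gcongr)
        nlinarith [norm_nonneg (u - w), hL.le]

end Aux

/-- Corollary A.1 of Fallah et al. (pseudo-smoothness of the MAML objective):
if each `𝓛ᵢ` has `L`-Lipschitz gradient and `ρ`-Lipschitz Hessian and `α ∈ [0, 1/L]`, then
`F(w') - F(w) - ⟨∇F(w), w'-w⟩ ≤ (L(w)/2)‖w'-w‖²` with
`L(w) = 4L + (2ρα/n)∑ᵢ‖∇𝓛ᵢ(w)‖`, where `F(w) = (1/n)∑ᵢ 𝓛ᵢ(w - α∇𝓛ᵢ(w))` and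
`∇F(w) = (1/n)∑ᵢ (I - α∇²𝓛ᵢ(w)) ∇𝓛ᵢ(w - α∇𝓛ᵢ(w))`. -/
theorem maml_pseudo_smoothness (n d : ℕ) (hn : 0 < n) (L ρ α : ℝ) (hL : 0 < L) (hρ : 0 ≤ ρ)
    (hα0 : 0 ≤ α) (hα : α ≤ 1 / L)
    (𝓛 : Fin n → EuclideanSpace ℝ (Fin d) → ℝ)
    (grad : Fin n → EuclideanSpace ℝ (Fin d) → EuclideanSpace ℝ (Fin d))
    (hess : Fin n → EuclideanSpace ℝ (Fin d) →
      EuclideanSpace ℝ (Fin d) →L[ℝ] EuclideanSpace ℝ (Fin d))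
    (hgrad : ∀ i w, HasGradientAt (𝓛 i) (grad i w) w)
    (hhess : ∀ i w, HasFDerivAt (grad i) (hess i w) w)
    (hLipG : ∀ i w w', ‖grad i w - grad i w'‖ ≤ L * ‖w - w'‖)
    (hLipH : ∀ i w w', ‖hess i w - hess i w'‖ ≤ ρ * ‖w - w'‖)
    (w w' : EuclideanSpace ℝ (Fin d)) :
    (n : ℝ)⁻¹ * ∑ i, 𝓛 i (w' - α • grad i w')
        - (n : ℝ)⁻¹ * ∑ i, 𝓛 i (w - α • grad i w)
        - (inner ℝ ((n : ℝ)⁻¹ • ∑ i, (grad i (w - α • grad i w)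
              - α • hess i w (grad i (w - α • grad i w)))) (w' - w) : ℝ)
      ≤ (4 * L + 2 * ρ * α / n * ∑ i, ‖grad i w‖) / 2 * ‖w' - w‖ ^ 2 := by
  have hαL : α * L ≤ 1 := by
    rw [div_eq_mul_inv, one_mul] at hα
    calc α * L ≤ L⁻¹ * L := by gcongr
      _ = 1 := inv_mul_cancel₀ hL.ne'
  -- operator norm bound on the Hessians
  have hHle : ∀ i u, ‖hess i u‖ ≤ L := by
    intro i u
    have hlip : LipschitzWith L.toNNReal (grad i) := by
      apply LipschitzWith.of_dist_le_mul
      intro u v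
      rw [dist_eq_norm, dist_eq_norm, Real.coe_toNNReal L hL.le]
      exact hLipG i u v
    have := (hhess i u).le_of_lipschitz hlip
    rwa [Real.coe_toNNReal L hL.le] at this
  set G : Fin n → EuclideanSpace ℝ (Fin d) → EuclideanSpace ℝ (Fin d) :=
    fun i u => grad i (u - α • grad i u) - α • hess i u (grad i (u - α • grad i u)) with hG
  set C : Fin n → ℝ := fun i => 4 * L + 2 * ρ * α * ‖grad i w‖ with hC
  have key : ∀ i, 𝓛 i (w' - α • grad i w') - 𝓛 i (w - α • grad i w)
      - ⟪G i w, w' - w⟫ ≤ C i / 2 * ‖w' - w‖ ^ 2 := by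
    intro i
    exact descent_lemma (fun u => 𝓛 i (u - α • grad i u)) (G i)
      (maml_grad (𝓛 i) (grad i) (hess i) α (hgrad i) (hhess i)) (C i) w w'
      (fun u => maml_lip (grad i) (hess i) L ρ α hL hρ hα0 hαL (hLipG i) (hHle i)
        (hLipH i) w u)
  have hn' : (0 : ℝ) < n := by exact_mod_cast hn
  have lhs_eq : (n : ℝ)⁻¹ * ∑ i, 𝓛 i (w' - α • grad i w')
      - (n : ℝ)⁻¹ * ∑ i, 𝓛 i (w - α • grad i w)
      - (inner ℝ ((n : ℝ)⁻¹ • ∑ i, G i w) (w' - w) : ℝ)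
      = (n : ℝ)⁻¹ * ∑ i, (𝓛 i (w' - α • grad i w') - 𝓛 i (w - α • grad i w)
          - ⟪G i w, w' - w⟫) := by
    rw [real_inner_smul_left, sum_inner, Finset.sum_sub_distrib, Finset.sum_sub_distrib]
    ring
  rw [lhs_eq]
  have sum_le : ∑ i, (𝓛 i (w' - α • grad i w') - 𝓛 i (w - α • grad i w)
      - ⟪G i w, w' - w⟫) ≤ ∑ i, (C i / 2 * ‖w' - w‖ ^ 2) :=
    Finset.sum_le_sum fun i _ => key i
  calc (n : ℝ)⁻¹ * ∑ i, (𝓛 i (w' - α • grad i w') - 𝓛 i (w - α • grad i w)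
          - ⟪G i w, w' - w⟫)
      ≤ (n : ℝ)⁻¹ * ∑ i, (C i / 2 * ‖w' - w‖ ^ 2) :=
        mul_le_mul_of_nonneg_left sum_le (inv_nonneg.mpr hn'.le)
    _ = (4 * L + 2 * ρ * α / n * ∑ i, ‖grad i w‖) / 2 * ‖w' - w‖ ^ 2 := by
        simp only [hC]
        rw [← Finset.sum_mul, ← Finset.sum_div, Finset.sum_add_distrib,
          Finset.sum_const, Finset.card_univ, Fintype.card_fin, ← Finset.mul_sum]
        rw [nsmul_eq_mul]
        linear_combination (2 * L * ‖w' - w‖ ^ 2) * inv_mul_cancel₀ hn'.ne'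
end

section
/- Let each $\mathcal{L}_i:\mathbb{R}^d\to\mathbb{R}$ have $L$-Lipschitz gradient and $\rho$-Lipschitz Hessian, and additionally suppose $\|\nabla\mathcal{L}_i(w)\|\le G$ for all $w$ and $i$. If $\alpha\in[0,1/L]$, then $F(w) = \frac{1}{n}\sum_{i=1}^n \mathcal{L}_i(w-\alpha\nabla\mathcal{L}_i(w))$ has $L_F$-Lipschitz gradient with $L_F = 4L + 2\rho\alpha G$. -/
open Finset

/-- Smoothness of the MAML objective under bounded gradients: if each `𝓛ᵢ` has
`L`-Lipschitz gradient, `ρ`-Lipschitz Hessian, `‖∇𝓛ᵢ(w)‖ ≤ G`, and `α ∈ [0, 1/L]`,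
then `∇F` is `L_F`-Lipschitz with `L_F = 4L + 2ραG`, where
`∇F(w) = (1/n)∑ᵢ (I - α∇²𝓛ᵢ(w)) ∇𝓛ᵢ(w - α∇𝓛ᵢ(w))`. -/
theorem maml_smoothness (n d : ℕ) (hn : 0 < n) (L ρ α G : ℝ) (hL : 0 < L) (hρ : 0 ≤ ρ)
    (hG : 0 ≤ G) (hα0 : 0 ≤ α) (hα : α ≤ 1 / L)
    (𝓛 : Fin n → EuclideanSpace ℝ (Fin d) → ℝ)
    (grad : Fin n → EuclideanSpace ℝ (Fin d) → EuclideanSpace ℝ (Fin d))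
    (hess : Fin n → EuclideanSpace ℝ (Fin d) →
      EuclideanSpace ℝ (Fin d) →L[ℝ] EuclideanSpace ℝ (Fin d))
    (hgrad : ∀ i w, HasGradientAt (𝓛 i) (grad i w) w)
    (hhess : ∀ i w, HasFDerivAt (grad i) (hess i w) w)
    (hLipG : ∀ i w w', ‖grad i w - grad i w'‖ ≤ L * ‖w - w'‖)
    (hLipH : ∀ i w w', ‖hess i w - hess i w'‖ ≤ ρ * ‖w - w'‖)
    (hbddG : ∀ i w, ‖grad i w‖ ≤ G) :
    ∀ w w' : EuclideanSpace ℝ (Fin d),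
      ‖(n : ℝ)⁻¹ • ∑ i, (grad i (w - α • grad i w)
            - α • hess i w (grad i (w - α • grad i w)))
          - (n : ℝ)⁻¹ • ∑ i, (grad i (w' - α • grad i w')
            - α • hess i w' (grad i (w' - α • grad i w')))‖
        ≤ (4 * L + 2 * ρ * α * G) * ‖w - w'‖ := by
  intro w w'
  have hαL : α * L ≤ 1 := by
    rw [le_div_iff₀ hL] at hα; linarith
  have hHnorm : ∀ i x, ‖hess i x‖ ≤ L := by
    intro i x
    have hlip : LipschitzWith (Real.toNNReal L) (grad i) := by
      apply LipschitzWith.of_dist_le_mul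
      intro a b
      rw [dist_eq_norm, dist_eq_norm, Real.coe_toNNReal L hL.le]
      exact hLipG i a b
    have h := (hhess i x).le_of_lipschitz hlip
    rwa [Real.coe_toNNReal L hL.le] at h
  have hnn : (0:ℝ) ≤ ‖w - w'‖ := norm_nonneg _
  have key : ∀ i : Fin n,
      ‖(grad i (w - α • grad i w) - α • hess i w (grad i (w - α • grad i w)))
        - (grad i (w' - α • grad i w') - α • hess i w' (grad i (w' - α • grad i w')))‖
        ≤ (4 * L + 2 * ρ * α * G) * ‖w - w'‖ := by
    intro i
    set u := w - α • grad i w with hu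
    set u' := w' - α • grad i w' with hu'
    have huu : ‖u - u'‖ ≤ 2 * ‖w - w'‖ := by
      have h1 : u - u' = (w - w') - α • (grad i w - grad i w') := by
        rw [hu, hu', smul_sub]; abel
      rw [h1]
      have h2 := norm_sub_le (w - w') (α • (grad i w - grad i w'))
      rw [norm_smul, Real.norm_eq_abs, abs_of_nonneg hα0] at h2
      have h3 := hLipG i w w'
      nlinarith [norm_nonneg (grad i w - grad i w')]
    have h1 : ‖grad i u - grad i u'‖ ≤ 2 * L * ‖w - w'‖ := by
      have := hLipG i u u'
      nlinarith [norm_nonneg (u - u')]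
    have h2 : ‖hess i w (grad i u) - hess i w' (grad i u')‖
        ≤ ρ * ‖w - w'‖ * G + 2 * L * L * ‖w - w'‖ := by
      have e : hess i w (grad i u) - hess i w' (grad i u')
          = (hess i w - hess i w') (grad i u) + hess i w' (grad i u - grad i u') := by
        simp [map_sub, ContinuousLinearMap.sub_apply]
      rw [e]
      have t1 : ‖(hess i w - hess i w') (grad i u)‖ ≤ ρ * ‖w - w'‖ * G := by
        calc ‖(hess i w - hess i w') (grad i u)‖
            ≤ ‖hess i w - hess i w'‖ * ‖grad i u‖ :=
              (hess i w - hess i w').le_opNorm _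
          _ ≤ ρ * ‖w - w'‖ * G := by
              apply mul_le_mul (hLipH i w w') (hbddG i u) (norm_nonneg _)
              positivity
      have t2 : ‖hess i w' (grad i u - grad i u')‖ ≤ L * (2 * L * ‖w - w'‖) := by
        calc ‖hess i w' (grad i u - grad i u')‖
            ≤ ‖hess i w'‖ * ‖grad i u - grad i u'‖ := (hess i w').le_opNorm _
          _ ≤ L * (2 * L * ‖w - w'‖) :=
              mul_le_mul (hHnorm i w') h1 (norm_nonneg _) hL.le
      have := norm_add_le ((hess i w - hess i w') (grad i u))
        (hess i w' (grad i u - grad i u'))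
      linarith
    have e2 : (grad i u - α • hess i w (grad i u))
          - (grad i u' - α • hess i w' (grad i u'))
        = (grad i u - grad i u')
          - α • (hess i w (grad i u) - hess i w' (grad i u')) := by
      rw [smul_sub]; abel
    rw [e2]
    have h3 := norm_sub_le (grad i u - grad i u')
      (α • (hess i w (grad i u) - hess i w' (grad i u')))
    rw [norm_smul, Real.norm_eq_abs, abs_of_nonneg hα0] at h3
    have h4 : α * ‖hess i w (grad i u) - hess i w' (grad i u')‖
        ≤ α * (ρ * ‖w - w'‖ * G + 2 * L * L * ‖w - w'‖) :=
      mul_le_mul_of_nonneg_left h2 hα0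
    have h5 : α * L * (L * ‖w - w'‖) ≤ 1 * (L * ‖w - w'‖) :=
      mul_le_mul_of_nonneg_right hαL (mul_nonneg hL.le hnn)
    have h6 : 0 ≤ ρ * α * G * ‖w - w'‖ := by positivity
    nlinarith [norm_nonneg (hess i w (grad i u) - hess i w' (grad i u'))]
  rw [← smul_sub, ← Finset.sum_sub_distrib]
  calc ‖(n : ℝ)⁻¹ • ∑ i : Fin n, ((grad i (w - α • grad i w)
          - α • hess i w (grad i (w - α • grad i w)))
        - (grad i (w' - α • grad i w')
          - α • hess i w' (grad i (w' - α • grad i w'))))‖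
      = (n : ℝ)⁻¹ * ‖∑ i : Fin n, ((grad i (w - α • grad i w)
          - α • hess i w (grad i (w - α • grad i w)))
        - (grad i (w' - α • grad i w')
          - α • hess i w' (grad i (w' - α • grad i w'))))‖ := by
        rw [norm_smul, Real.norm_eq_abs, abs_of_nonneg (by positivity)]
    _ ≤ (n : ℝ)⁻¹ * ∑ i : Fin n, ‖(grad i (w - α • grad i w)
          - α • hess i w (grad i (w - α • grad i w)))
        - (grad i (w' - α • grad i w')
          - α • hess i w' (grad i (w' - α • grad i w')))‖ := by
        gcongr
        exact norm_sum_le _ _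
    _ ≤ (n : ℝ)⁻¹ * ∑ _i : Fin n, (4 * L + 2 * ρ * α * G) * ‖w - w'‖ := by
        gcongr with i
        exact key i
    _ = (4 * L + 2 * ρ * α * G) * ‖w - w'‖ := by
        rw [Finset.sum_const, card_univ, Fintype.card_fin, nsmul_eq_mul]
        field_simp
end

section
/- Suppose each $\mathcal{L}_i$ has $L$-Lipschitz gradient, $\|\nabla\mathcal{L}_i(w)\|\le G$ for all $w$, gradient dissimilarity $\frac{1}{n}\sum_i\|\nabla\mathcal{L}_i(w)-\nabla\mathcal{L}(w)\|^2\le\gamma_G^2$, Hessian dissimilarity $\frac{1}{n}\sum_i\|\nabla^2\mathcal{L}_i(w)-\frac{1}{n}\sum_j\nabla^2\mathcal{L}_j(w)\|^2\le\gamma_H^2$, and $\alpha\in(0,1/L]$. Then $\frac{1}{n}\sum_{i=1}^n\|\nabla F_i(w)-\nabla F(w)\|^2 \le 3G^2\alpha^2\gamma_H^2 + 192\gamma_G^2$ for all $w$, where $F_i(w)=\mathcal{L}_i(w-\alpha\nabla\mathcal{L}_i(w))$ and $F=\frac{1}{n}\sum_i F_i$. -/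
open Finset

set_option maxHeartbeats 1000000

/-- The mean minimizes the sum of squared distances. -/
lemma sum_sq_mean_le {E : Type*} [NormedAddCommGroup E] [InnerProductSpace ℝ E]
    {n : ℕ} (hn : 0 < n) (x : Fin n → E) (c : E) :
    ∑ i, ‖x i - (n : ℝ)⁻¹ • ∑ j, x j‖ ^ 2 ≤ ∑ i, ‖x i - c‖ ^ 2 := by
  set m : E := (n : ℝ)⁻¹ • ∑ j, x j with hm
  have hnm : (n : ℝ) • m = ∑ j, x j := by
    rw [hm, smul_smul, mul_inv_cancel₀ (by exact_mod_cast hn.ne'), one_smul]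
  have key : ∀ i, ‖x i - m‖ ^ 2
      = ‖x i - c‖ ^ 2 - 2 * inner ℝ (x i - c) (m - c) + ‖m - c‖ ^ 2 := by
    intro i
    have h : x i - m = (x i - c) - (m - c) := by abel
    rw [h, norm_sub_sq_real]
  have hsum : ∑ i, (x i - c) = (n : ℝ) • (m - c) := by
    rw [Finset.sum_sub_distrib, smul_sub, hnm]
    congr 1
    rw [Finset.sum_const, Finset.card_univ, Fintype.card_fin, Nat.cast_smul_eq_nsmul ℝ]
  calc ∑ i, ‖x i - m‖ ^ 2
      = ∑ i, (‖x i - c‖ ^ 2 - 2 * inner ℝ (x i - c) (m - c) + ‖m - c‖ ^ 2) := by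
        exact Finset.sum_congr rfl fun i _ => key i
    _ = (∑ i, ‖x i - c‖ ^ 2) - 2 * inner ℝ (∑ i, (x i - c)) (m - c)
        + (n : ℝ) * ‖m - c‖ ^ 2 := by
        rw [Finset.sum_add_distrib, Finset.sum_sub_distrib, ← Finset.mul_sum,
          ← sum_inner]
        simp [Finset.card_univ]
    _ = (∑ i, ‖x i - c‖ ^ 2) - 2 * ((n : ℝ) * ‖m - c‖ ^ 2)
        + (n : ℝ) * ‖m - c‖ ^ 2 := by
        rw [hsum, real_inner_smul_left, real_inner_self_eq_norm_sq]
    _ = (∑ i, ‖x i - c‖ ^ 2) - (n : ℝ) * ‖m - c‖ ^ 2 := by ring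
    _ ≤ ∑ i, ‖x i - c‖ ^ 2 := by
        have : 0 ≤ (n : ℝ) * ‖m - c‖ ^ 2 :=
          mul_nonneg (Nat.cast_nonneg n) (sq_nonneg _)
        linarith

/-- Abstract version of the meta-gradient dissimilarity bound. -/
lemma meta_grad_dissimilarity_aux {E : Type*} [NormedAddCommGroup E] [InnerProductSpace ℝ E]
    {n : ℕ} (hn : 0 < n) (L α G γG γH : ℝ) (hL : 0 < L)
    (hG : 0 ≤ G) (hγG : 0 ≤ γG) (hγH : 0 ≤ γH) (hα0 : 0 < α) (hαL : α * L ≤ 1)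
    (grad : Fin n → E → E) (hess : Fin n → E → E →L[ℝ] E)
    (hHnorm : ∀ i w, ‖hess i w‖ ≤ L)
    (hLipG : ∀ i w w', ‖grad i w - grad i w'‖ ≤ L * ‖w - w'‖)
    (hbddG : ∀ i w, ‖grad i w‖ ≤ G)
    (hdisG : ∀ w : E,
      (n : ℝ)⁻¹ * ∑ i, ‖grad i w - (n : ℝ)⁻¹ • ∑ j, grad j w‖ ^ 2 ≤ γG ^ 2)
    (hdisH : ∀ w : E,
      (n : ℝ)⁻¹ * ∑ i, ‖hess i w - (n : ℝ)⁻¹ • ∑ j, hess j w‖ ^ 2 ≤ γH ^ 2)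
    (w : E) :
    (n : ℝ)⁻¹ * ∑ i, ‖(grad i (w - α • grad i w)
          - α • hess i w (grad i (w - α • grad i w)))
        - (n : ℝ)⁻¹ • ∑ j, (grad j (w - α • grad j w)
          - α • hess j w (grad j (w - α • grad j w)))‖ ^ 2
      ≤ 3 * G ^ 2 * α ^ 2 * γH ^ 2 + 192 * γG ^ 2 := by
  have hn0 : (0 : ℝ) < (n : ℝ) := by exact_mod_cast hn
  have hninv : (0 : ℝ) ≤ (n : ℝ)⁻¹ := by positivity
  -- notation
  set a : Fin n → E := fun i => grad i w with ha
  set abar : E := (n : ℝ)⁻¹ • ∑ j, a j with habar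
  set g : Fin n → E := fun i => grad i (w - α • a i) with hg
  set gh : Fin n → E := fun i => grad i (w - α • abar) with hgh
  set ghbar : E := (n : ℝ)⁻¹ • ∑ j, gh j with hghbar
  set Hb : E →L[ℝ] E := (n : ℝ)⁻¹ • ∑ j, hess j w with hHb
  set x : Fin n → E := fun i => g i - α • hess i w (g i) with hx
  set c : E := ghbar - α • Hb ghbar with hc
  have hHbnorm : ‖Hb‖ ≤ L := by
    calc ‖Hb‖ = ‖(n : ℝ)⁻¹‖ * ‖∑ j, hess j w‖ := by
          rw [hHb]; exact norm_smul ((n : ℝ)⁻¹) (∑ j, hess j w)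
      _ ≤ (n : ℝ)⁻¹ * ∑ j, ‖hess j w‖ := by
          rw [Real.norm_eq_abs, abs_of_nonneg hninv]
          gcongr
          exact norm_sum_le _ _
      _ ≤ (n : ℝ)⁻¹ * ∑ _j : Fin n, L := by
          gcongr with j
          exact hHnorm j w
      _ = L := by
          rw [Finset.sum_const, Finset.card_univ, Fintype.card_fin, nsmul_eq_mul]
          field_simp
  -- pointwise squared bound
  have hb : ∀ i, ‖x i - c‖ ^ 2 ≤ 12 * ‖a i - abar‖ ^ 2 + 12 * ‖gh i - ghbar‖ ^ 2
      + 3 * α ^ 2 * G ^ 2 * ‖hess i w - Hb‖ ^ 2 := by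
    intro i
    have hid : x i - c = ((g i - gh i) + (gh i - ghbar))
        - α • ((hess i w - Hb) (g i)) - α • (Hb (g i - ghbar)) := by
      simp only [hx, hc, ContinuousLinearMap.sub_apply, map_sub, smul_sub]
      abel
    have h1 : ‖g i - gh i‖ ≤ ‖a i - abar‖ := by
      have h1a := hLipG i (w - α • a i) (w - α • abar)
      have h1b : ‖(w - α • a i) - (w - α • abar)‖ = α * ‖a i - abar‖ := by
        have h : (w - α • a i) - (w - α • abar) = α • (abar - a i) := by
          rw [smul_sub]; abel
        rw [h, norm_smul, Real.norm_eq_abs, abs_of_pos hα0, norm_sub_rev]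
      rw [h1b] at h1a
      calc ‖g i - gh i‖ ≤ L * (α * ‖a i - abar‖) := h1a
        _ = (α * L) * ‖a i - abar‖ := by ring
        _ ≤ 1 * ‖a i - abar‖ := by
            apply mul_le_mul_of_nonneg_right hαL (norm_nonneg _)
        _ = ‖a i - abar‖ := one_mul _
    have h2 : ‖(hess i w - Hb) (g i)‖ ≤ ‖hess i w - Hb‖ * G := by
      calc ‖(hess i w - Hb) (g i)‖ ≤ ‖hess i w - Hb‖ * ‖g i‖ :=
            ContinuousLinearMap.le_opNorm _ _
        _ ≤ ‖hess i w - Hb‖ * G :=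
            mul_le_mul_of_nonneg_left (hbddG i _) (norm_nonneg _)
    have h3 : ‖Hb (g i - ghbar)‖ ≤ L * (‖g i - gh i‖ + ‖gh i - ghbar‖) := by
      have htr : ‖g i - ghbar‖ ≤ ‖g i - gh i‖ + ‖gh i - ghbar‖ := by
        calc ‖g i - ghbar‖ = ‖(g i - gh i) + (gh i - ghbar)‖ := by abel_nf
          _ ≤ ‖g i - gh i‖ + ‖gh i - ghbar‖ := norm_add_le _ _
      calc ‖Hb (g i - ghbar)‖ ≤ ‖Hb‖ * ‖g i - ghbar‖ :=
            ContinuousLinearMap.le_opNorm _ _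
        _ ≤ L * (‖g i - gh i‖ + ‖gh i - ghbar‖) :=
            mul_le_mul hHbnorm htr (norm_nonneg _) hL.le
    have htri : ‖x i - c‖ ≤ (‖g i - gh i‖ + ‖gh i - ghbar‖)
        + α * ‖(hess i w - Hb) (g i)‖ + α * ‖Hb (g i - ghbar)‖ := by
      rw [hid]
      calc ‖((g i - gh i) + (gh i - ghbar)) - α • ((hess i w - Hb) (g i))
            - α • (Hb (g i - ghbar))‖
          ≤ ‖((g i - gh i) + (gh i - ghbar)) - α • ((hess i w - Hb) (g i))‖
            + ‖α • (Hb (g i - ghbar))‖ := norm_sub_le _ _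
        _ ≤ (‖(g i - gh i) + (gh i - ghbar)‖ + ‖α • ((hess i w - Hb) (g i))‖)
            + ‖α • (Hb (g i - ghbar))‖ := by
            have := norm_sub_le ((g i - gh i) + (gh i - ghbar))
              (α • ((hess i w - Hb) (g i)))
            linarith
        _ ≤ (‖g i - gh i‖ + ‖gh i - ghbar‖) + α * ‖(hess i w - Hb) (g i)‖
            + α * ‖Hb (g i - ghbar)‖ := by
            rw [norm_smul, norm_smul, Real.norm_eq_abs, abs_of_pos hα0]
            have := norm_add_le (g i - gh i) (gh i - ghbar)
            linarith
    have hn1 := norm_nonneg (g i - gh i)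
    have hn2 := norm_nonneg (gh i - ghbar)
    have hn3 := norm_nonneg (hess i w - Hb)
    have h2' : α * ‖(hess i w - Hb) (g i)‖ ≤ α * (‖hess i w - Hb‖ * G) :=
      mul_le_mul_of_nonneg_left h2 hα0.le
    have h3' : α * ‖Hb (g i - ghbar)‖
        ≤ α * (L * (‖g i - gh i‖ + ‖gh i - ghbar‖)) :=
      mul_le_mul_of_nonneg_left h3 hα0.le
    have h3'' : α * (L * (‖g i - gh i‖ + ‖gh i - ghbar‖))
        ≤ ‖g i - gh i‖ + ‖gh i - ghbar‖ := by
      have := mul_le_mul_of_nonneg_right hαL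
        (by linarith : (0:ℝ) ≤ ‖g i - gh i‖ + ‖gh i - ghbar‖)
      calc α * (L * (‖g i - gh i‖ + ‖gh i - ghbar‖))
          = (α * L) * (‖g i - gh i‖ + ‖gh i - ghbar‖) := by ring
        _ ≤ 1 * (‖g i - gh i‖ + ‖gh i - ghbar‖) := this
        _ = _ := one_mul _
    have hmain : ‖x i - c‖ ≤ 2 * ‖a i - abar‖ + 2 * ‖gh i - ghbar‖
        + α * G * ‖hess i w - Hb‖ := by
      have hαGC : α * (‖hess i w - Hb‖ * G) = α * G * ‖hess i w - Hb‖ := by ring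
      linarith [htri, h1, h2', h3', h3'', hαGC.le]
    have hN := norm_nonneg (x i - c)
    have hsq : ‖x i - c‖ ^ 2 ≤ (2 * ‖a i - abar‖ + 2 * ‖gh i - ghbar‖
        + α * G * ‖hess i w - Hb‖) ^ 2 := by
      apply pow_le_pow_left₀ hN hmain
    have hA := norm_nonneg (a i - abar)
    nlinarith [sq_nonneg (2 * ‖a i - abar‖ - 2 * ‖gh i - ghbar‖),
      sq_nonneg (2 * ‖a i - abar‖ - α * G * ‖hess i w - Hb‖),
      sq_nonneg (2 * ‖gh i - ghbar‖ - α * G * ‖hess i w - Hb‖)]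
  -- combine
  have hvar : ∑ i, ‖x i - (n : ℝ)⁻¹ • ∑ j, x j‖ ^ 2 ≤ ∑ i, ‖x i - c‖ ^ 2 :=
    sum_sq_mean_le hn x c
  have hA' : (n : ℝ)⁻¹ * ∑ i, ‖a i - abar‖ ^ 2 ≤ γG ^ 2 := hdisG w
  have hB' : (n : ℝ)⁻¹ * ∑ i, ‖gh i - ghbar‖ ^ 2 ≤ γG ^ 2 := hdisG (w - α • abar)
  have hC' : (n : ℝ)⁻¹ * ∑ i, ‖hess i w - Hb‖ ^ 2 ≤ γH ^ 2 := hdisH w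
  calc (n : ℝ)⁻¹ * ∑ i, ‖x i - (n : ℝ)⁻¹ • ∑ j, x j‖ ^ 2
      ≤ (n : ℝ)⁻¹ * ∑ i, ‖x i - c‖ ^ 2 :=
        mul_le_mul_of_nonneg_left hvar hninv
    _ ≤ (n : ℝ)⁻¹ * ∑ i, (12 * ‖a i - abar‖ ^ 2 + 12 * ‖gh i - ghbar‖ ^ 2
        + 3 * α ^ 2 * G ^ 2 * ‖hess i w - Hb‖ ^ 2) :=
        mul_le_mul_of_nonneg_left (Finset.sum_le_sum fun i _ => hb i) hninv
    _ = 12 * ((n : ℝ)⁻¹ * ∑ i, ‖a i - abar‖ ^ 2)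
        + 12 * ((n : ℝ)⁻¹ * ∑ i, ‖gh i - ghbar‖ ^ 2)
        + 3 * α ^ 2 * G ^ 2 * ((n : ℝ)⁻¹ * ∑ i, ‖hess i w - Hb‖ ^ 2) := by
        rw [Finset.sum_add_distrib, Finset.sum_add_distrib,
          ← Finset.mul_sum, ← Finset.mul_sum, ← Finset.mul_sum]
        ring
    _ ≤ 12 * γG ^ 2 + 12 * γG ^ 2 + 3 * α ^ 2 * G ^ 2 * γH ^ 2 := by
        have hc1 : (0:ℝ) ≤ 3 * α ^ 2 * G ^ 2 := by positivity
        have := mul_le_mul_of_nonneg_left hC' hc1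
        nlinarith
    _ ≤ 3 * G ^ 2 * α ^ 2 * γH ^ 2 + 192 * γG ^ 2 := by nlinarith [sq_nonneg γG]

/-- Lemma 4.4 of Fallah et al. (meta-gradient dissimilarity): under `L`-Lipschitz gradients,
bounded gradients, gradient dissimilarity `γG²`, Hessian dissimilarity `γH²`, and
`α ∈ (0, 1/L]`, one has
`(1/n)∑ᵢ‖∇Fᵢ(w) - ∇F(w)‖² ≤ 3G²α²γH² + 192γG²`, where
`∇Fᵢ(w) = (I - α∇²𝓛ᵢ(w)) ∇𝓛ᵢ(w - α∇𝓛ᵢ(w))` and `∇F` is their average. -/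
theorem meta_grad_dissimilarity (n d : ℕ) (hn : 0 < n) (L α G γG γH : ℝ) (hL : 0 < L)
    (hG : 0 ≤ G) (hγG : 0 ≤ γG) (hγH : 0 ≤ γH) (hα0 : 0 < α) (hα : α ≤ 1 / L)
    (𝓛 : Fin n → EuclideanSpace ℝ (Fin d) → ℝ)
    (grad : Fin n → EuclideanSpace ℝ (Fin d) → EuclideanSpace ℝ (Fin d))
    (hess : Fin n → EuclideanSpace ℝ (Fin d) →
      EuclideanSpace ℝ (Fin d) →L[ℝ] EuclideanSpace ℝ (Fin d))
    (hgrad : ∀ i w, HasGradientAt (𝓛 i) (grad i w) w)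
    (hhess : ∀ i w, HasFDerivAt (grad i) (hess i w) w)
    (hLipG : ∀ i w w', ‖grad i w - grad i w'‖ ≤ L * ‖w - w'‖)
    (hbddG : ∀ i w, ‖grad i w‖ ≤ G)
    (hdisG : ∀ w : EuclideanSpace ℝ (Fin d),
      (n : ℝ)⁻¹ * ∑ i, ‖grad i w - (n : ℝ)⁻¹ • ∑ j, grad j w‖ ^ 2 ≤ γG ^ 2)
    (hdisH : ∀ w : EuclideanSpace ℝ (Fin d),
      (n : ℝ)⁻¹ * ∑ i, ‖hess i w - (n : ℝ)⁻¹ • ∑ j, hess j w‖ ^ 2 ≤ γH ^ 2)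
    (w : EuclideanSpace ℝ (Fin d)) :
    (n : ℝ)⁻¹ * ∑ i, ‖(grad i (w - α • grad i w)
          - α • hess i w (grad i (w - α • grad i w)))
        - (n : ℝ)⁻¹ • ∑ j, (grad j (w - α • grad j w)
          - α • hess j w (grad j (w - α • grad j w)))‖ ^ 2
      ≤ 3 * G ^ 2 * α ^ 2 * γH ^ 2 + 192 * γG ^ 2 := by
  have hαL : α * L ≤ 1 := by
    rw [le_div_iff₀ hL] at hα; linarith
  have hHnorm : ∀ i w', ‖hess i w'‖ ≤ L := by
    intro i w'
    have hlip : LipschitzWith ⟨L, hL.le⟩ (grad i) := by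
      apply LipschitzWith.of_dist_le_mul
      intro u v
      exact (by simpa [dist_eq_norm] using hLipG i u v : dist (grad i u) (grad i v) ≤ L * dist u v)
    exact (hhess i w').le_of_lipschitz hlip
  exact meta_grad_dissimilarity_aux hn L α G γG γH hL hG hγG hγH hα0 hαL
    grad hess hHnorm hLipG hbddG hdisG hdisH w
end

section
/- Let $u, v, \hat{v}, w \in \mathbb{R}^d$ (a Hilbert space), $\beta\in(0,1)$, and let $\hat{v}$ be a random vector with $\mathbb{E}[\hat{v}] = v'$ for some fixed $v'$ and $\mathbb{E}[\|\hat{v}-v'\|^2]\le\sigma^2$. Define $u^+ = (1-\beta)u + \beta\hat{v}$. Then $\mathbb{E}[\|v' - u^+\|^2] \le (1-\beta)\|v-u\|^2 + (1-\beta)(1+1/\beta)\|v'-v\|^2 + \beta^2\sigma^2$. -/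
open MeasureTheory


private lemma young_aux (β p q X : ℝ) (hβ0 : 0 < β) (hβ1 : β < 1) (hp : 0 ≤ p) (hq : 0 ≤ q)
    (hX0 : 0 ≤ X) (hX : X ≤ q + p) :
    (1 - β) ^ 2 * X ^ 2 ≤ (1 - β) * p ^ 2 + (1 - β) * (1 + 1 / β) * q ^ 2 := by
  have h1 : X ^ 2 ≤ (q + p) ^ 2 := by nlinarith
  have h2 : 2 * p * q ≤ β * p ^ 2 + (1 / β) * q ^ 2 := by
    rw [← mul_le_mul_iff_right₀ hβ0]
    have h3 : β * ((1 / β) * q ^ 2) = q ^ 2 := by field_simp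
    nlinarith [sq_nonneg (β * p - q)]
  have hyoung2 : (q + p) ^ 2 ≤ (1 + β) * p ^ 2 + (1 + 1 / β) * q ^ 2 := by nlinarith
  have hfac : (1 - β) ^ 2 * (1 + β) ≤ 1 - β := by nlinarith [mul_nonneg (sub_nonneg.mpr hβ1.le) (sq_nonneg β)]
  have hfac2 : (1 - β) ^ 2 * (1 + 1 / β) ≤ (1 - β) * (1 + 1 / β) := by
    have h1β : (0:ℝ) ≤ 1 + 1 / β := by positivity
    nlinarith
  have s1 : (1 - β) ^ 2 * X ^ 2 ≤ (1 - β) ^ 2 * ((1 + β) * p ^ 2 + (1 + 1 / β) * q ^ 2) :=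
    mul_le_mul_of_nonneg_left (h1.trans hyoung2) (sq_nonneg _)
  nlinarith [mul_le_mul_of_nonneg_right hfac (sq_nonneg p),
    mul_le_mul_of_nonneg_right hfac2 (sq_nonneg q)]

/-- One-step contraction of the moving-average estimator in MOML: with
`u⁺ = (1-β)u + β v̂`, `𝔼[v̂] = v'`, `𝔼‖v̂ - v'‖² ≤ σ²`, and `β ∈ (0,1)`,
`𝔼‖v' - u⁺‖² ≤ (1-β)‖v-u‖² + (1-β)(1+1/β)‖v'-v‖² + β²σ²`. -/
theorem moving_average_one_step {Ω : Type*} [MeasurableSpace Ω] (μ : Measure Ω)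
    [IsProbabilityMeasure μ] (d : ℕ) (β σ : ℝ) (hβ : β ∈ Set.Ioo (0 : ℝ) 1) (hσ : 0 ≤ σ)
    (u v v' : EuclideanSpace ℝ (Fin d)) (vh : Ω → EuclideanSpace ℝ (Fin d))
    (hint : Integrable vh μ) (hmean : ∫ ω, vh ω ∂μ = v')
    (hvarint : Integrable (fun ω => ‖vh ω - v'‖ ^ 2) μ)
    (hvar : ∫ ω, ‖vh ω - v'‖ ^ 2 ∂μ ≤ σ ^ 2) :
    ∫ ω, ‖v' - ((1 - β) • u + β • vh ω)‖ ^ 2 ∂μ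
      ≤ (1 - β) * ‖v - u‖ ^ 2 + (1 - β) * (1 + 1 / β) * ‖v' - v‖ ^ 2 + β ^ 2 * σ ^ 2 := by
  obtain ⟨hβ0, hβ1⟩ := hβ
  set a : EuclideanSpace ℝ (Fin d) := (1 - β) • (v' - u) with ha
  have hrw : ∀ ω, v' - ((1 - β) • u + β • vh ω) = a - β • (vh ω - v') := by
    intro ω; rw [ha]; module
  have he_int : Integrable (fun ω => vh ω - v') μ := hint.sub (integrable_const _)
  have hmean0 : ∫ ω, (vh ω - v') ∂μ = 0 := by
    rw [integral_sub hint (integrable_const _), hmean, integral_const]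
    simp
  have hexp : ∀ ω, ‖a - β • (vh ω - v')‖ ^ 2
      = ‖a‖ ^ 2 - 2 * β * inner ℝ a (vh ω - v') + β ^ 2 * ‖vh ω - v'‖ ^ 2 := by
    intro ω
    have hb : ‖β • (vh ω - v')‖ ^ 2 = β ^ 2 * ‖vh ω - v'‖ ^ 2 := by
      rw [norm_smul]
      simp only [Real.norm_eq_abs]
      rw [mul_pow, sq_abs]
    rw [norm_sub_sq_real, real_inner_smul_right, hb]
    ring
  have hinner_int : Integrable (fun ω => (inner ℝ a (vh ω - v') : ℝ)) μ :=
    he_int.const_inner a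
  have hinner0 : ∫ ω, (inner ℝ a (vh ω - v') : ℝ) ∂μ = 0 := by
    rw [integral_inner he_int, hmean0, inner_zero_right]
  have h1int : Integrable (fun ω => ‖a‖ ^ 2 - 2 * β * inner ℝ a (vh ω - v')) μ :=
    (integrable_const _).sub (hinner_int.const_mul (2 * β))
  have hI : ∫ ω, ‖v' - ((1 - β) • u + β • vh ω)‖ ^ 2 ∂μ
      = ‖a‖ ^ 2 + β ^ 2 * ∫ ω, ‖vh ω - v'‖ ^ 2 ∂μ := by
    calc ∫ ω, ‖v' - ((1 - β) • u + β • vh ω)‖ ^ 2 ∂μ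
        = ∫ ω, (‖a‖ ^ 2 - 2 * β * inner ℝ a (vh ω - v') + β ^ 2 * ‖vh ω - v'‖ ^ 2) ∂μ := by
          congr 1; funext ω; rw [hrw ω, hexp ω]
      _ = ‖a‖ ^ 2 + β ^ 2 * ∫ ω, ‖vh ω - v'‖ ^ 2 ∂μ := by
          rw [integral_add h1int (hvarint.const_mul _),
            integral_sub (integrable_const _) (hinner_int.const_mul (2 * β)),
            integral_const, integral_const_mul, integral_const_mul, hinner0]
          simp
  rw [hI]
  have hna : ‖a‖ ^ 2 = (1 - β) ^ 2 * ‖v' - u‖ ^ 2 := by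
    rw [ha, norm_smul]
    simp only [Real.norm_eq_abs]
    rw [mul_pow, sq_abs]
  have htri : ‖v' - u‖ ≤ ‖v' - v‖ + ‖v - u‖ := by
    simpa using norm_add_le (v' - v) (v - u)
  have hyoung : (1 - β) ^ 2 * ‖v' - u‖ ^ 2
      ≤ (1 - β) * ‖v - u‖ ^ 2 + (1 - β) * (1 + 1 / β) * ‖v' - v‖ ^ 2 :=
    young_aux β ‖v - u‖ ‖v' - v‖ ‖v' - u‖ hβ0 hβ1 (norm_nonneg _) (norm_nonneg _)
      (norm_nonneg _) htri
  have hvar' : β ^ 2 * ∫ ω, ‖vh ω - v'‖ ^ 2 ∂μ ≤ β ^ 2 * σ ^ 2 :=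
    mul_le_mul_of_nonneg_left hvar (by positivity)
  linarith [hna, hyoung, hvar']
end
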